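/- Let n be a positive even integer and let m = ⌈log₂ n⌉ − 1, so that 2^m < n ≤ 2^{m+1}, with m ≥ 1. Then ‖n‖₂ = m + 1 if and only if n = 2^{m+1} or n = 2^m + 2^t for some integer t with 1 ≤ t < m. -/
import Mathlib


/-- `CanRepr l n m` means `n` can be expressed using exactly `m` copies of `l`
    combined with addition and multiplication (and parentheses). -/
inductive CanRepr (l : ℕ) : ℕ → ℕ → Prop
  | base : CanRepr l l 1
  | add {a b p q : ℕ} : CanRepr l a p → CanRepr l b q → CanRepr l (a + b) (p + q)
  | mul {a b p q : ℕ} : CanRepr l a p → CanRepr l b q → CanRepr l (a * b) (p + q)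

/-- The `l`-complexity `‖n‖_l`: the minimal number of `l`'s needed to express `n`
    using only addition and multiplication. (By convention `sInf ∅ = 0`.) -/
noncomputable def complexity (l n : ℕ) : ℕ := sInf {m | CanRepr l n m}

lemma canRepr_pos {l n p : ℕ} (h : CanRepr l n p) : 1 ≤ p := by
  induction h with
  | base => exact le_refl 1
  | add _ _ ih1 ih2 => omega
  | mul _ _ ih1 ih2 => omega

lemma canRepr_ge {n p : ℕ} (h : CanRepr 2 n p) : 2 ≤ n := by
  induction h with
  | base => exact le_refl 2
  | add _ _ ih1 ih2 => omega
  | mul _ _ ih1 ih2 => nlinarith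

lemma canRepr_even {n p : ℕ} (h : CanRepr 2 n p) : 2 ∣ n := by
  induction h with
  | base => exact dvd_refl 2
  | add _ _ ih1 ih2 => exact dvd_add ih1 ih2
  | mul _ _ ih1 ih2 => exact ih1.mul_right _

lemma canRepr_le {n p : ℕ} (h : CanRepr 2 n p) : n ≤ 2 ^ p := by
  induction h with
  | base => simp
  | @add a b q r ha hb iha ihb =>
    obtain ⟨q', rfl⟩ : ∃ q', q = q' + 1 := ⟨q - 1, by have := canRepr_pos ha; omega⟩
    obtain ⟨r', rfl⟩ : ∃ r', r = r' + 1 := ⟨r - 1, by have := canRepr_pos hb; omega⟩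
    have hx : 1 ≤ 2 ^ q' := Nat.one_le_two_pow
    have hy : 1 ≤ 2 ^ r' := Nat.one_le_two_pow
    have key : 2 ^ (q' + 1) + 2 ^ (r' + 1) ≤ 2 ^ (q' + 1 + (r' + 1)) := by
      have e1 : (2:ℕ) ^ (q' + 1) = 2 * 2 ^ q' := by ring
      have e2 : (2:ℕ) ^ (r' + 1) = 2 * 2 ^ r' := by ring
      have e3 : (2:ℕ) ^ (q' + 1 + (r' + 1)) = 4 * (2 ^ q' * 2 ^ r') := by ring
      rw [e1, e2, e3]; nlinarith
    omega
  | @mul a b q r ha hb iha ihb =>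
    calc a * b ≤ 2 ^ q * 2 ^ r := Nat.mul_le_mul iha ihb
      _ = 2 ^ (q + r) := (pow_add 2 q r).symm

lemma canRepr_pow (k : ℕ) (hk : 1 ≤ k) : CanRepr 2 (2 ^ k) k := by
  induction k with
  | zero => omega
  | succ k ih =>
    rcases Nat.eq_zero_or_pos k with rfl | hk'
    · simpa using CanRepr.base
    · have := CanRepr.mul (ih hk') CanRepr.base
      simpa [pow_succ] using this

lemma canRepr_double (k : ℕ) (hk : 1 ≤ k) : CanRepr 2 (2 * k) k := by
  induction k with
  | zero => omega
  | succ k ih =>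
    rcases Nat.eq_zero_or_pos k with rfl | hk'
    · simpa using CanRepr.base
    · have := CanRepr.add (ih hk') CanRepr.base
      have e : 2 * (k + 1) = 2 * k + 2 := by ring
      rwa [e]

lemma canRepr_split {m t : ℕ} (ht1 : 1 ≤ t) (ht2 : t < m) :
    CanRepr 2 (2 ^ m + 2 ^ t) (m + 1) := by
  rcases Nat.lt_or_ge t 2 with h | h
  · have ht : t = 1 := by omega
    subst ht
    have := CanRepr.add (canRepr_pow m (by omega)) CanRepr.base
    simpa [pow_one] using this
  · obtain ⟨s, rfl⟩ : ∃ s, t = s + 2 := ⟨t - 2, by omega⟩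
    obtain ⟨e, rfl⟩ : ∃ e, m = s + 2 + (e + 1) := ⟨m - (s + 2) - 1, by omega⟩
    have h1 : CanRepr 2 (2 ^ (s + 1)) (s + 1) := canRepr_pow _ (by omega)
    have h2 : CanRepr 2 (2 ^ (e + 2) + 2) (e + 2 + 1) :=
      CanRepr.add (canRepr_pow _ (by omega)) CanRepr.base
    have h3 := CanRepr.mul h1 h2
    have hval : 2 ^ (s + 1) * (2 ^ (e + 2) + 2) = 2 ^ (s + 2 + (e + 1)) + 2 ^ (s + 2) := by
      ring
    have hc : s + 2 + (e + 1) + 1 = s + 1 + (e + 2 + 1) := by omega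
    rw [hc, ← hval]
    exact h3

lemma canRepr_key {n p : ℕ} (h : CanRepr 2 n p) (hlt : 2 ^ (p - 1) < n) :
    n = 2 ^ p ∨ ∃ t, 1 ≤ t ∧ t + 2 ≤ p ∧ n = 2 ^ (p - 1) + 2 ^ t := by
  induction h with
  | base => left; rfl
  | @add a b q r ha hb iha ihb =>
    obtain ⟨q', rfl⟩ : ∃ q', q = q' + 1 := ⟨q - 1, by have := canRepr_pos ha; omega⟩
    obtain ⟨r', rfl⟩ : ∃ r', r = r' + 1 := ⟨r - 1, by have := canRepr_pos hb; omega⟩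
    have hpred : q' + 1 + (r' + 1) - 1 = q' + r' + 1 := by omega
    rw [hpred] at hlt ⊢
    have hA : a ≤ 2 ^ (q' + 1) := canRepr_le ha
    have hB : b ≤ 2 ^ (r' + 1) := canRepr_le hb
    have ha2 : 2 ≤ a := canRepr_ge ha
    have hb2 : 2 ≤ b := canRepr_ge hb
    have hae : 2 ∣ a := canRepr_even ha
    have hbe : 2 ∣ b := canRepr_even hb
    rcases Nat.eq_zero_or_pos q' with rfl | hq'
    · -- a = 2
      have haa : a = 2 := by omega
      have hPe : 2 ∣ 2 ^ (r' + 1) := dvd_pow_self 2 (by omega)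
      have hn : a + b = 2 ^ (0 + r' + 1) + 2 := by
        have : 2 ^ (0 + r' + 1) < a + b := hlt
        have : a + b ≤ 2 + 2 ^ (r' + 1) := by omega
        simp only [Nat.zero_add] at *
        omega
      rcases Nat.eq_zero_or_pos r' with rfl | hr'
      · left; rw [hn]; norm_num
      · right; exact ⟨1, le_refl 1, by omega, by rw [hn]; norm_num⟩
    · rcases Nat.eq_zero_or_pos r' with rfl | hr'
      · -- b = 2
        have hbb : b = 2 := by omega
        have hn : a + b = 2 ^ (q' + 0 + 1) + 2 := by
          have h1 : 2 ^ (q' + 0 + 1) < a + b := hlt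
          have h2 : a + b ≤ 2 ^ (q' + 1) + 2 := by omega
          have hPe : 2 ∣ 2 ^ (q' + 1) := dvd_pow_self 2 (by omega)
          simp only [Nat.add_zero] at *
          omega
        right; exact ⟨1, le_refl 1, by omega, by rw [hn]; norm_num⟩
      · -- both q', r' ≥ 1 : contradiction
        exfalso
        have h1 : 2 ^ (q' + 1) ≤ 2 ^ (q' + r') := Nat.pow_le_pow_right (by norm_num) (by omega)
        have h2 : 2 ^ (r' + 1) ≤ 2 ^ (q' + r') := Nat.pow_le_pow_right (by norm_num) (by omega)
        have h3 : (2:ℕ) ^ (q' + r' + 1) = 2 ^ (q' + r') + 2 ^ (q' + r') := by ring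
        omega
  | @mul a b q r ha hb iha ihb =>
    obtain ⟨q', rfl⟩ : ∃ q', q = q' + 1 := ⟨q - 1, by have := canRepr_pos ha; omega⟩
    obtain ⟨r', rfl⟩ : ∃ r', r = r' + 1 := ⟨r - 1, by have := canRepr_pos hb; omega⟩
    have hpred : q' + 1 + (r' + 1) - 1 = q' + r' + 1 := by omega
    rw [hpred] at hlt ⊢
    simp only [Nat.add_sub_cancel] at iha ihb
    have hA : a ≤ 2 ^ (q' + 1) := canRepr_le ha
    have hB : b ≤ 2 ^ (r' + 1) := canRepr_le hb
    have hagt : 2 ^ q' < a := by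
      by_contra h'
      push_neg at h'
      have : a * b ≤ 2 ^ q' * 2 ^ (r' + 1) := Nat.mul_le_mul h' hB
      have he : (2:ℕ) ^ q' * 2 ^ (r' + 1) = 2 ^ (q' + r' + 1) := by ring
      omega
    have hbgt : 2 ^ r' < b := by
      by_contra h'
      push_neg at h'
      have : a * b ≤ 2 ^ (q' + 1) * 2 ^ r' := Nat.mul_le_mul hA h'
      have he : (2:ℕ) ^ (q' + 1) * 2 ^ r' = 2 ^ (q' + r' + 1) := by ring
      omega
    rcases iha hagt with hA' | ⟨s, hs1, hs2, hA'⟩ <;>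
      rcases ihb hbgt with hB' | ⟨t, ht1, ht2, hB'⟩
    · left; rw [hA', hB']; ring
    · -- a = 2^(q'+1), b = 2^r' + 2^t, t + 2 ≤ r' + 1
      right
      refine ⟨q' + 1 + t, by omega, by omega, ?_⟩
      rw [hA', hB']
      have : (2:ℕ) ^ (q' + 1) * (2 ^ r' + 2 ^ t) = 2 ^ (q' + r' + 1) + 2 ^ (q' + 1 + t) := by
        ring
      rw [this]
    · -- symmetric
      right
      refine ⟨r' + 1 + s, by omega, by omega, ?_⟩
      rw [hA', hB']
      have : (2 ^ q' + 2 ^ s) * (2:ℕ) ^ (r' + 1) = 2 ^ (q' + r' + 1) + 2 ^ (r' + 1 + s) := by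
        ring
      rw [this]
    · -- both split
      obtain ⟨u, rfl⟩ : ∃ u, q' = s + 1 + u := ⟨q' - s - 1, by omega⟩
      obtain ⟨v, rfl⟩ : ∃ v, r' = t + 1 + v := ⟨r' - t - 1, by omega⟩
      rw [hA', hB'] at hlt
      have hred : 2 ^ (u + v + 3) < (2 * 2 ^ u + 1) * (2 * 2 ^ v + 1) := by
        have e1 : ((2:ℕ) ^ (s + 1 + u) + 2 ^ s) * (2 ^ (t + 1 + v) + 2 ^ t)
            = 2 ^ (s + t) * ((2 * 2 ^ u + 1) * (2 * 2 ^ v + 1)) := by ring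
        have e2 : (2:ℕ) ^ (s + 1 + u + (t + 1 + v) + 1) = 2 ^ (s + t) * 2 ^ (u + v + 3) := by
          ring
        rw [e1, e2] at hlt
        exact Nat.lt_of_mul_lt_mul_left hlt
      have hXY : (2:ℕ) ^ (u + v + 3) = 8 * (2 ^ u * 2 ^ v) := by ring
      have hu : u = 0 := by
        by_contra h'
        have hX : 2 ≤ 2 ^ u := by
          calc (2:ℕ) = 2 ^ 1 := (pow_one 2).symm
            _ ≤ 2 ^ u := Nat.pow_le_pow_right (by norm_num) (by omega)
        have hY : 1 ≤ 2 ^ v := Nat.one_le_two_pow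
        nlinarith
      have hv : v = 0 := by
        by_contra h'
        have hY : 2 ≤ 2 ^ v := by
          calc (2:ℕ) = 2 ^ 1 := (pow_one 2).symm
            _ ≤ 2 ^ v := Nat.pow_le_pow_right (by norm_num) (by omega)
        have hX : 1 ≤ 2 ^ u := Nat.one_le_two_pow
        nlinarith
      subst hu; subst hv
      right
      refine ⟨s + t, by omega, by omega, ?_⟩
      rw [hA', hB']
      have hc : s + 1 + 0 + (t + 1 + 0) + 1 = s + t + 3 := by omega
      rw [hc]
      have : ((2:ℕ) ^ (s + 1 + 0) + 2 ^ s) * (2 ^ (t + 1 + 0) + 2 ^ t)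
          = 2 ^ (s + t + 3) + 2 ^ (s + t) := by ring
      rw [this]

theorem stmt_6 (m n : ℕ) (hm : 1 ≤ m) (hn : 0 < n) (heven : 2 ∣ n)
    (hlb : 2 ^ m < n) (hub : n ≤ 2 ^ (m + 1)) :
    complexity 2 n = m + 1 ↔
      n = 2 ^ (m + 1) ∨ ∃ t, 1 ≤ t ∧ t < m ∧ n = 2 ^ m + 2 ^ t := by
  have hne : {p | CanRepr 2 n p}.Nonempty := by
    obtain ⟨k, rfl⟩ := heven
    exact ⟨k, canRepr_double k (by nlinarith [Nat.one_le_two_pow (n := m)])⟩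
  constructor
  · intro h
    have hmem : CanRepr 2 n (m + 1) := by
      have h2 := Nat.sInf_mem hne
      rw [show sInf {p | CanRepr 2 n p} = complexity 2 n from rfl, h] at h2
      exact h2
    rcases canRepr_key hmem (by simpa using hlb) with h1 | ⟨t, ht1, ht2, ht3⟩
    · left; exact h1
    · right
      refine ⟨t, ht1, by omega, ?_⟩
      simpa using ht3
  · intro h
    have hrep : CanRepr 2 n (m + 1) := by
      rcases h with rfl | ⟨t, ht1, ht2, rfl⟩
      · exact canRepr_pow (m + 1) (by omega)
      · exact canRepr_split ht1 ht2
    have hle : complexity 2 n ≤ m + 1 := Nat.sInf_le hrep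
    have hge : m + 1 ≤ complexity 2 n := by
      have hmem := Nat.sInf_mem hne
      have h1 : n ≤ 2 ^ sInf {p | CanRepr 2 n p} := canRepr_le hmem
      have h2 : 2 ^ m < 2 ^ sInf {p | CanRepr 2 n p} := lt_of_lt_of_le hlb h1
      have h3 : m < sInf {p | CanRepr 2 n p} :=
        (Nat.pow_lt_pow_iff_right (by norm_num)).mp h2
      exact h3
    omega
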